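/- Let G be a finite group and suppose the trivial G-module ℤ admits a resolution 0 → P_n → ⋯ → P_0 → ℤ → 0 of finite length by free ℤG-modules. Then G is trivial. -/

import Mathlib

open MonoidAlgebra Finset

section ChaseLemmas

variable {A : Type*} [Ring A]

/-- Abstract diagram chase: with `t * s = 0`, if the kernel of `f` satisfies
`ker (t•) ⊆ im (s•)` (relative to the kernel) and the domain satisfies
`ker (s•) ⊆ im (t•)`, then the image of `f` satisfies `ker (s•) ⊆ im (t•)`. -/
lemma stmt17_chase {P Q : Type*} [AddCommGroup P] [Module A P] [AddCommGroup Q] [Module A Q]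
    (s t : A) (hts : t * s = 0) (f : P →ₗ[A] Q)
    (hK : ∀ x : P, f x = 0 → t • x = 0 → ∃ z, f z = 0 ∧ x = s • z)
    (hP : ∀ w : P, s • w = 0 → ∃ v, w = t • v) :
    ∀ w : P, s • f w = 0 → ∃ v : P, f w = t • f v := by
  intro w hw
  have h1 : f (s • w) = 0 := by rw [map_smul]; exact hw
  have h2 : t • (s • w) = 0 := by rw [smul_smul, hts, zero_smul]
  obtain ⟨z, hz0, hz⟩ := hK _ h1 h2
  obtain ⟨v, hv⟩ := hP (w - z) (by rw [smul_sub, hz, sub_self])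
  refine ⟨v, ?_⟩
  have hfw : f w = f (w - z) := by rw [map_sub, hz0, sub_zero]
  rw [hfw, hv, map_smul]

/-- If left multiplication satisfies `ker (s *) ⊆ im (t *)` on the ring itself,
the same holds on any free module. -/
lemma stmt17_free_half {P : Type*} [AddCommGroup P] [Module A P]
    (s t : A) (h : ∀ a : A, s * a = 0 → ∃ c, a = t * c)
    (hfree : Module.Free A P) :
    ∀ m : P, s • m = 0 → ∃ v, m = t • v := by
  classical
  have b := hfree.chooseBasis
  intro m hm
  have hFi : ∀ i, s * b.repr m i = 0 := by
    intro i
    have h1 : b.repr (s • m) i = b.repr (0 : P) i := by rw [hm]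
    simpa [Finsupp.smul_apply] using h1
  have hc : ∀ i, ∃ c, b.repr m i = t * c ∧ (b.repr m i = 0 → c = 0) := by
    intro i
    by_cases h0 : b.repr m i = 0
    · exact ⟨0, by rw [h0, mul_zero], fun _ => rfl⟩
    · obtain ⟨c, hc⟩ := h _ (hFi i)
      exact ⟨c, hc, fun hh => absurd hh h0⟩
  choose c hc1 hc2 using hc
  refine ⟨b.repr.symm (Finsupp.onFinset (b.repr m).support c ?_), ?_⟩
  · intro i hi
    rw [Finsupp.mem_support_iff]
    exact fun h0 => hi (hc2 i h0)
  · apply b.repr.injective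
    rw [map_smul, LinearEquiv.apply_symm_apply]
    ext i
    rw [Finsupp.smul_apply, Finsupp.onFinset_apply, smul_eq_mul, ← hc1 i]

end ChaseLemmas

section RepLemmas

variable {G : Type} [Group G]

/-- Choice of representatives and positions for the orbits of left multiplication
by powers of `g`, where `g ^ p = 1`. -/
lemma stmt17_exists_rep (g : G) (p : ℕ) (hppos : 0 < p) (hg1 : g ^ p = 1) :
    ∃ (r : G → G) (k : G → ℕ),
      (∀ (i : ℕ) (h : G), r (g ^ i * h) = r h) ∧
      (∀ h, k h < p) ∧ (∀ h, h = g ^ (k h) * r h) := by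
  classical
  have hsymm : ∀ {h h' : G}, (∃ i : ℕ, h' = g ^ i * h) → ∃ i : ℕ, h = g ^ i * h' := by
    rintro h h' ⟨i, rfl⟩
    refine ⟨i * (p - 1), ?_⟩
    rw [← mul_assoc, ← pow_add]
    have he : i * (p - 1) + i = p * i := by
      obtain ⟨q, rfl⟩ : ∃ q, p = q + 1 := ⟨p - 1, by omega⟩
      have hq : q + 1 - 1 = q := rfl
      rw [hq]; ring
    rw [he, pow_mul, hg1, one_pow, one_mul]
  let sd : Setoid G :=
    ⟨fun h h' => ∃ i : ℕ, h' = g ^ i * h,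
      ⟨fun h => ⟨0, by simp⟩, hsymm, by
        rintro a b c ⟨i, rfl⟩ ⟨j, rfl⟩
        exact ⟨j + i, by rw [← mul_assoc, ← pow_add]⟩⟩⟩
  let r : G → G := fun h => (Quotient.mk sd h).out
  have hrel : ∀ h, ∃ i : ℕ, h = g ^ i * r h := by
    intro h
    have h1 : Quotient.mk sd (r h) = Quotient.mk sd h := Quotient.out_eq _
    exact Quotient.exact h1
  have hr : ∀ (i : ℕ) (h : G), r (g ^ i * h) = r h := by
    intro i h
    have h1 : Quotient.mk sd (g ^ i * h) = Quotient.mk sd h :=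
      Quotient.sound (hsymm ⟨i, rfl⟩)
    simpa [r] using congrArg Quotient.out h1
  refine ⟨r, fun h => Classical.choose (hrel h) % p, hr, fun h => Nat.mod_lt _ hppos, ?_⟩
  intro h
  have hspec := Classical.choose_spec (hrel h)
  set c := Classical.choose (hrel h) with hc
  have hpow : g ^ (c % p) = g ^ c := by
    conv_rhs => rw [← Nat.mod_add_div c p]
    rw [pow_add, pow_mul, hg1, one_pow, mul_one]
  rw [hpow]; exact hspec

end RepLemmas

section RingLemmas

variable {G : Type} [Group G]

/-- Reindexing: summing `f (i+1)` over `range p` equals summing `f i`, when `f p = f 0`. -/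
lemma stmt17_shift_sum (p : ℕ) (f : ℕ → MonoidAlgebra ℤ G) (hf : f p = f 0) :
    ∑ i ∈ Finset.range p, f (i + 1) = ∑ i ∈ Finset.range p, f i := by
  have h1 := (Finset.sum_range_succ' f p).symm.trans (Finset.sum_range_succ f p)
  rw [hf] at h1
  exact add_right_cancel h1

lemma stmt17_single_mul_nu (g : G) (p : ℕ) (hg1 : g ^ p = 1) :
    MonoidAlgebra.single g (1:ℤ) * (∑ i ∈ Finset.range p, MonoidAlgebra.single (g ^ i) (1:ℤ))
      = ∑ i ∈ Finset.range p, MonoidAlgebra.single (g ^ i) (1:ℤ) := by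
  rw [Finset.mul_sum]
  have h1 : ∀ i ∈ Finset.range p,
      MonoidAlgebra.single g (1:ℤ) * MonoidAlgebra.single (g ^ i) (1:ℤ)
        = MonoidAlgebra.single (g ^ (i + 1)) (1:ℤ) := by
    intro i _
    rw [MonoidAlgebra.single_mul_single, one_mul, ← pow_succ']
  rw [Finset.sum_congr rfl h1]
  exact stmt17_shift_sum p (fun i => MonoidAlgebra.single (g ^ i) (1:ℤ))
    (by show MonoidAlgebra.single (g ^ p) (1:ℤ) = MonoidAlgebra.single (g ^ 0) (1:ℤ)
        rw [hg1, pow_zero])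

lemma stmt17_nu_mul_single (g : G) (p : ℕ) (hg1 : g ^ p = 1) :
    (∑ i ∈ Finset.range p, MonoidAlgebra.single (g ^ i) (1:ℤ)) * MonoidAlgebra.single g (1:ℤ)
      = ∑ i ∈ Finset.range p, MonoidAlgebra.single (g ^ i) (1:ℤ) := by
  rw [Finset.sum_mul]
  have h1 : ∀ i ∈ Finset.range p,
      MonoidAlgebra.single (g ^ i) (1:ℤ) * MonoidAlgebra.single g (1:ℤ)
        = MonoidAlgebra.single (g ^ (i + 1)) (1:ℤ) := by
    intro i _
    rw [MonoidAlgebra.single_mul_single, one_mul, ← pow_succ]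
  rw [Finset.sum_congr rfl h1]
  exact stmt17_shift_sum p (fun i => MonoidAlgebra.single (g ^ i) (1:ℤ))
    (by show MonoidAlgebra.single (g ^ p) (1:ℤ) = MonoidAlgebra.single (g ^ 0) (1:ℤ)
        rw [hg1, pow_zero])

/-- Evaluation of `ν * a` at a group element. -/
lemma stmt17_nu_mul_apply (g : G) (p : ℕ) (a : MonoidAlgebra ℤ G) (h : G) :
    ((∑ i ∈ Finset.range p, MonoidAlgebra.single (g ^ i) (1:ℤ)) * a).coeff h
      = ∑ i ∈ Finset.range p, a.coeff ((g ^ i)⁻¹ * h) := by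
  rw [Finset.sum_mul, MonoidAlgebra.coeff_sum, Finset.sum_apply']
  refine Finset.sum_congr rfl fun i _ => ?_
  rw [MonoidAlgebra.coeff_single_mul_apply, one_mul]

section OrbitData

variable (g : G) (p : ℕ) (hppos : 0 < p) (hg1 : g ^ p = 1)
  (hinj : ∀ i j, i < p → j < p → g ^ i = g ^ j → i = j)
  (r : G → G) (k : G → ℕ)
  (hr : ∀ (i : ℕ) (h : G), r (g ^ i * h) = r h)
  (hklt : ∀ h, k h < p) (hk : ∀ h, h = g ^ (k h) * r h)

include hinj hklt hk in
/-- Uniqueness of the position index. -/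
lemma stmt17_k_unique (h : G) (j : ℕ) (hj : j < p) (hjh : h = g ^ j * r h) : j = k h := by
  have h1 : g ^ j * r h = g ^ (k h) * r h := by rw [← hjh, ← hk h]
  exact hinj j (k h) hj (hklt h) (mul_right_cancel h1)

include hr hk in
lemma stmt17_r_idem (h : G) : r (r h) = r h := by
  conv_rhs => rw [hk h]
  rw [hr]

include hr in
lemma stmt17_r_inv (h : G) : r (g⁻¹ * h) = r h := by
  have h1 : h = g ^ 1 * (g⁻¹ * h) := by simp
  conv_rhs => rw [h1, hr]

include hppos hg1 hinj hr hklt hk in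
/-- Kernel of left multiplication by `single g 1 - 1` is contained in the image of
left multiplication by `ν`. -/
lemma stmt17_lemA (a : MonoidAlgebra ℤ G)
    (ha : (MonoidAlgebra.single g (1:ℤ) - 1) * a = 0) :
    ∃ c, a = (∑ i ∈ Finset.range p, MonoidAlgebra.single (g ^ i) (1:ℤ)) * c := by
  classical
  rw [sub_mul, one_mul, sub_eq_zero] at ha
  have ha' : ∀ h : G, a.coeff (g⁻¹ * h) = a.coeff h := by
    intro h
    have h1 : (MonoidAlgebra.single g (1:ℤ) * a).coeff h = a.coeff h := by rw [ha]
    rwa [MonoidAlgebra.coeff_single_mul_apply, one_mul] at h1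
  have hconst : ∀ (i : ℕ) (h : G), a.coeff ((g ^ i)⁻¹ * h) = a.coeff h := by
    intro i
    induction i with
    | zero => intro h; simp
    | succ i ih =>
      intro h
      have hrw : (g ^ (i + 1))⁻¹ * h = g⁻¹ * ((g ^ i)⁻¹ * h) := by
        rw [pow_succ, mul_inv_rev, mul_assoc]
      rw [hrw, ha', ih]
  have hrep : ∀ h : G, (g ^ (k h))⁻¹ * h = r h := by
    intro h
    have h1 := congrArg (fun x => (g ^ (k h))⁻¹ * x) (hk h)
    simpa [inv_mul_cancel_left] using h1
  have hah : ∀ h : G, a.coeff (r h) = a.coeff h := by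
    intro h
    rw [← hrep h, hconst]
  set cc : MonoidAlgebra ℤ G :=
    MonoidAlgebra.ofCoeff <| Finsupp.onFinset a.coeff.support (fun h => if r h = h then a.coeff h else 0)
      (by
        intro h hh
        rw [Finsupp.mem_support_iff]
        intro h0
        apply hh
        simp [h0]) with hcc
  refine ⟨cc, MonoidAlgebra.ext (Finsupp.ext fun h => ?_)⟩
  rw [stmt17_nu_mul_apply]
  rw [Finset.sum_eq_single (k h)]
  · rw [hrep h, hcc, MonoidAlgebra.coeff_ofCoeff, Finsupp.onFinset_apply, if_pos (stmt17_r_idem g r k hr hk h), hah]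
  · intro i hi hne
    have hrx : r ((g ^ i)⁻¹ * h) = r h := by
      have he : h = g ^ i * ((g ^ i)⁻¹ * h) := by simp
      conv_rhs => rw [he, hr]
    have hq : ¬ (r ((g ^ i)⁻¹ * h) = (g ^ i)⁻¹ * h) := by
      intro hq
      apply hne
      refine stmt17_k_unique g p hinj r k hklt hk h i (Finset.mem_range.mp hi) ?_
      rw [← hrx, hq, mul_inv_cancel_left]
    rw [hcc, MonoidAlgebra.coeff_ofCoeff, Finsupp.onFinset_apply, if_neg hq]
  · intro hmem
    exact absurd (Finset.mem_range.mpr (hklt h)) hmem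

include hppos hg1 hinj hr hklt hk in
/-- Kernel of left multiplication by `ν` is contained in the image of
left multiplication by `single g 1 - 1`. -/
lemma stmt17_lemB (a : MonoidAlgebra ℤ G)
    (hb : (∑ i ∈ Finset.range p, MonoidAlgebra.single (g ^ i) (1:ℤ)) * a = 0) :
    ∃ c, a = (MonoidAlgebra.single g (1:ℤ) - 1) * c := by
  classical
  have hb' : ∀ h : G, ∑ i ∈ Finset.range p, a.coeff ((g ^ i)⁻¹ * h) = 0 := by
    intro h
    have h1 : ((∑ i ∈ Finset.range p, MonoidAlgebra.single (g ^ i) (1:ℤ)) * a).coeff h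
        = (0 : MonoidAlgebra ℤ G).coeff h := by rw [hb]
    rwa [stmt17_nu_mul_apply, MonoidAlgebra.coeff_zero, Finsupp.zero_apply] at h1
  have hginvpow : g⁻¹ = g ^ (p - 1) := by
    have h1 : g ^ (p - 1) * g = 1 := by
      rw [← pow_succ]
      have h2 : p - 1 + 1 = p := by omega
      rw [h2, hg1]
    exact (eq_inv_of_mul_eq_one_left h1).symm
  set S : Finset G := (Finset.range p).biUnion
    (fun i => a.coeff.support.image (fun x => g ^ i * x)) with hS
  have hsupp : ∀ h : G, -∑ m ∈ Finset.range (k h + 1), a.coeff (g ^ m * r h) ≠ 0 → h ∈ S := by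
    intro h hh
    have h1 : ∃ m ∈ Finset.range (k h + 1), a.coeff (g ^ m * r h) ≠ 0 := by
      by_contra hcon
      push_neg at hcon
      exact hh (by rw [Finset.sum_eq_zero hcon, neg_zero])
    obtain ⟨m, hm, hmne⟩ := h1
    have hmle : m ≤ k h := by
      have := Finset.mem_range.mp hm; omega
    rw [hS, Finset.mem_biUnion]
    refine ⟨k h - m, Finset.mem_range.mpr (by have := hklt h; omega), ?_⟩
    rw [Finset.mem_image]
    refine ⟨g ^ m * r h, Finsupp.mem_support_iff.mpr hmne, ?_⟩
    rw [← mul_assoc, ← pow_add]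
    have h2 : k h - m + m = k h := by omega
    rw [h2, ← hk h]
  set cc : MonoidAlgebra ℤ G :=
    MonoidAlgebra.ofCoeff <| Finsupp.onFinset S (fun h => -∑ m ∈ Finset.range (k h + 1), a.coeff (g ^ m * r h)) hsupp
    with hcc
  refine ⟨cc, MonoidAlgebra.ext (Finsupp.ext fun h => ?_)⟩
  rw [sub_mul, one_mul, MonoidAlgebra.coeff_sub, Finsupp.sub_apply, MonoidAlgebra.coeff_single_mul_apply, one_mul]
  rw [hcc, MonoidAlgebra.coeff_ofCoeff (Finsupp.onFinset _ _ hsupp), Finsupp.onFinset_apply, Finsupp.onFinset_apply]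
  have hrinv : r (g⁻¹ * h) = r h := stmt17_r_inv g r hr h
  rcases Nat.eq_zero_or_pos (k h) with hk0 | hkpos
  · -- position 0 case: h = r h
    have hhr : h = r h := by
      have h1 := hk h
      rwa [hk0, pow_zero, one_mul] at h1
    have hkinv : k (g⁻¹ * h) = p - 1 := by
      refine (stmt17_k_unique g p hinj r k hklt hk (g⁻¹ * h) (p - 1) (by omega) ?_).symm
      rw [hrinv, ← hhr, ← hginvpow]
    have horbit : ∑ m ∈ Finset.range p, a.coeff (g ^ m * h) = 0 := by
      have h2 := hb' (g ^ (p - 1) * h)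
      have h3 : ∀ i ∈ Finset.range p, a.coeff ((g ^ i)⁻¹ * (g ^ (p - 1) * h))
          = a.coeff (g ^ (p - 1 - i) * h) := by
        intro i hi
        have hile : i ≤ p - 1 := by have := Finset.mem_range.mp hi; omega
        have h4 : g ^ (p - 1) = g ^ i * g ^ (p - 1 - i) := by
          rw [← pow_add]
          congr 1
          omega
        rw [h4, mul_assoc, inv_mul_cancel_left]
      rw [Finset.sum_congr rfl h3] at h2
      have h4 := Finset.sum_range_reflect (fun m => a.coeff (g ^ m * h)) p
      rw [← h4]
      exact h2
    rw [hkinv, hrinv, hk0]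
    have h5 : p - 1 + 1 = p := by omega
    rw [h5, ← hhr, horbit, neg_zero, zero_sub, Finset.sum_range_one, pow_zero, one_mul,
      neg_neg]
  · -- position j + 1 case
    obtain ⟨j, hj⟩ : ∃ j, k h = j + 1 := ⟨k h - 1, by omega⟩
    have hkinv : k (g⁻¹ * h) = j := by
      refine (stmt17_k_unique g p hinj r k hklt hk (g⁻¹ * h) j
        (by have := hklt h; omega) ?_).symm
      rw [hrinv]
      conv_lhs => rw [hk h, hj]
      simp [pow_succ', mul_assoc]
    rw [hkinv, hrinv, hj]
    rw [Finset.sum_range_succ (fun m => a.coeff (g ^ m * r h)) (j + 1)]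
    have hlast : a.coeff (g ^ (j + 1) * r h) = a.coeff h := by
      conv_rhs => rw [hk h, hj]
    rw [hlast]
    ring

end OrbitData

end RingLemmas

/-- The integers with the trivial action of `G`, as a module over the integral group
ring `ℤG`. -/
def TrivZMod (G : Type) [Group G] : Type := ℤ

instance (G : Type) [Group G] : AddCommGroup (TrivZMod G) :=
  inferInstanceAs (AddCommGroup ℤ)

noncomputable instance (G : Type) [Group G] : Module (MonoidAlgebra ℤ G) (TrivZMod G) :=
  Module.compHom ℤ ((MonoidAlgebra.lift ℤ ℤ G) 1).toRingHom

/-- If the trivial module `ℤ` over the integral group ring of a finite group `G` admits a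
finite-length resolution by free `ℤG`-modules, then `G` is trivial. -/
theorem stmt17 (G : Type) [Group G] [Finite G]
    (h : ∃ (n : ℕ) (P : ℕ → ModuleCat (MonoidAlgebra ℤ G))
        (d : ∀ i : ℕ, P (i + 1) ⟶ P i)
        (ε : P 0 ⟶ ModuleCat.of (MonoidAlgebra ℤ G) (TrivZMod G)),
        (∀ i, Module.Free (MonoidAlgebra ℤ G) (P i)) ∧
        (∀ i, n < i → Subsingleton (P i)) ∧
        Function.Surjective ε ∧
        Function.Exact (d 0) ε ∧
        (∀ i, Function.Exact (d (i + 1)) (d i))) :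
    Subsingleton G := by
  classical
  obtain ⟨n, P, d, ε, hfree, hsmall, hsurj, hexact0, hexact⟩ := h
  by_contra hG
  have hnt : Nontrivial G := not_subsingleton_iff_nontrivial.mp hG
  obtain ⟨g₀, hg₀⟩ := exists_ne (1 : G)
  have hfin : orderOf g₀ ≠ 0 := (orderOf_pos g₀).ne'
  have h1 : orderOf g₀ ≠ 1 := by
    simpa [orderOf_eq_one_iff] using hg₀
  obtain ⟨p, hp, hdvd⟩ := Nat.exists_prime_and_dvd h1
  set g : G := g₀ ^ (orderOf g₀ / p) with hgdef
  have hord : orderOf g = p := orderOf_pow_orderOf_div hfin hdvd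
  have hppos : 0 < p := hp.pos
  have hg1 : g ^ p = 1 := by rw [← hord]; exact pow_orderOf_eq_one g
  have hinj : ∀ i j, i < p → j < p → g ^ i = g ^ j → i = j := by
    intro i j hi hj hij
    have h2 := pow_inj_mod.mp hij
    rwa [hord, Nat.mod_eq_of_lt hi, Nat.mod_eq_of_lt hj] at h2
  obtain ⟨r, k, hr, hklt, hk⟩ := stmt17_exists_rep g p hppos hg1
  set σ : MonoidAlgebra ℤ G := MonoidAlgebra.single g (1:ℤ) - 1 with hσ
  set ν : MonoidAlgebra ℤ G := ∑ i ∈ Finset.range p, MonoidAlgebra.single (g ^ i) (1:ℤ)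
    with hν
  have hσν : σ * ν = 0 := by
    rw [hσ, hν, sub_mul, one_mul, stmt17_single_mul_nu g p hg1, sub_self]
  have hνσ : ν * σ = 0 := by
    rw [hσ, hν, mul_sub, mul_one, stmt17_nu_mul_single g p hg1, sub_self]
  have hA : ∀ a : MonoidAlgebra ℤ G, σ * a = 0 → ∃ c, a = ν * c := fun a ha =>
    stmt17_lemA g p hppos hg1 hinj r k hr hklt hk a ha
  have hB : ∀ a : MonoidAlgebra ℤ G, ν * a = 0 → ∃ c, a = σ * c := fun a ha =>
    stmt17_lemB g p hppos hg1 hinj r k hr hklt hk a ha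
  have hfreeA : ∀ i : ℕ, ∀ m : P i, σ • m = 0 → ∃ v : P i, m = ν • v := fun i =>
    stmt17_free_half σ ν hA (hfree i)
  have hfreeB : ∀ i : ℕ, ∀ m : P i, ν • m = 0 → ∃ v : P i, m = σ • v := fun i =>
    stmt17_free_half ν σ hB (hfree i)
  -- descending induction along the resolution
  have key : ∀ m i : ℕ, n ≤ i + m →
      ((∀ w : P (i+1), σ • (d i w) = 0 → ∃ v, d i w = ν • (d i v)) ∧
       (∀ w : P (i+1), ν • (d i w) = 0 → ∃ v, d i w = σ • (d i v))) := by
    intro m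
    induction m with
    | zero =>
      intro i hi
      have hsub : Subsingleton (P (i+1)) := hsmall (i+1) (by omega)
      constructor <;>
        · intro w hw
          refine ⟨0, ?_⟩
          rw [Subsingleton.elim w (0 : P (i+1)), map_zero, smul_zero]
    | succ m ih =>
      intro i hi
      have ih' := ih (i+1) (by omega)
      constructor
      · refine stmt17_chase σ ν hνσ (d i).hom ?_ (hfreeA (i+1))
        intro x hx htx
        obtain ⟨u, hu⟩ := (hexact i x).mp hx
        obtain ⟨v, hv⟩ := ih'.2 u (by rw [hu]; exact htx)
        exact ⟨d (i+1) v, (hexact i _).mpr ⟨v, rfl⟩, by rw [← hu]; exact hv⟩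
      · refine stmt17_chase ν σ hσν (d i).hom ?_ (hfreeB (i+1))
        intro x hx htx
        obtain ⟨u, hu⟩ := (hexact i x).mp hx
        obtain ⟨v, hv⟩ := ih'.1 u (by rw [hu]; exact htx)
        exact ⟨d (i+1) v, (hexact i _).mpr ⟨v, rfl⟩, by rw [← hu]; exact hv⟩
  -- final step across the augmentation map
  have final : ∀ w : P 0, σ • (ε w) = 0 → ∃ v, ε w = ν • (ε v) := by
    refine stmt17_chase σ ν hνσ ε.hom ?_ (hfreeA 0)
    intro x hx htx
    obtain ⟨u, hu⟩ := (hexact0 x).mp hx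
    obtain ⟨v, hv⟩ := (key n 0 (by omega)).2 u (by rw [hu]; exact htx)
    exact ⟨d 0 v, (hexact0 _).mpr ⟨v, rfl⟩, by rw [← hu]; exact hv⟩
  obtain ⟨w, hw⟩ := hsurj (show TrivZMod G from (1 : ℤ))
  have hσ1 : (MonoidAlgebra.lift ℤ ℤ G) 1 σ = 0 := by
    simp [hσ, MonoidAlgebra.lift_single]
  have hν1 : (MonoidAlgebra.lift ℤ ℤ G) 1 ν = (p : ℤ) := by
    simp [hν, MonoidAlgebra.lift_single]
  obtain ⟨v, hv⟩ := final w (by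
    rw [hw]
    show (MonoidAlgebra.lift ℤ ℤ G) 1 σ * (1 : ℤ) = (0 : ℤ)
    rw [hσ1, zero_mul])
  rw [hw] at hv
  have h2 : (1 : ℤ) = (p : ℤ) * (show ℤ from ε v) := by
    calc (1 : ℤ) = ((MonoidAlgebra.lift ℤ ℤ G) 1 ν) * (show ℤ from ε v) := hv
    _ = (p : ℤ) * (show ℤ from ε v) := by rw [hν1]
  have hdvd1 : (p : ℤ) ∣ 1 := ⟨_, h2⟩
  have hle := Int.le_of_dvd one_pos hdvd1
  have h2le := hp.two_le
  omega
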